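/- Let μ be a probability measure on X = {0,1}^E having Papangelou intensity α, i.e. for every measurable h : E × X → [0,∞], ∫ Σ_{x∈ξ} h(x, ξ∖{x}) μ(dξ) = ∫ Σ_{x∈E∖ξ} α(x;ξ) h(x, ξ) μ(dξ) (values in [0,∞]). Let b, d : E × X → [0,∞) be bounded measurable birth and death rates satisfying the detailed balance relation b(x;ξ) = α(x;ξ) · d(x; ξ∪{x}) for all x ∈ E and all ξ ∈ X with x ∉ ξ. Then the Glauber pregenerator L^G is symmetric with respect to μ: for all f, g ∈ D(X), ∫ f(ξ) L^G g(ξ) μ(dξ) = ∫ L^G f(ξ) g(ξ) μ(dξ). -/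

import Mathlib

open MeasureTheory
open scoped ENNReal

/-- The Glauber pregenerator with death rates `d` and birth rates `b`:
`L^G f(ξ) = Σ_{x∈ξ} d(x;ξ)[f(ξ∖{x}) − f(ξ)] + Σ_{y∉ξ} b(y;ξ)[f(ξ∪{y}) − f(ξ)]`. -/
noncomputable def glauberGen {E : Type*} [DecidableEq E]
    (b d : E → (E → Bool) → ℝ) (f : (E → Bool) → ℝ) (ξ : E → Bool) : ℝ :=
  ∑' x : E,
    (if ξ x = true then d x ξ * (f (Function.update ξ x false) - f ξ)
     else b x ξ * (f (Function.update ξ x true) - f ξ))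

section Aux

variable {E : Type*} [Countable E] [DecidableEq E]

private lemma measSet (x : E) (v : Bool) : MeasurableSet {ξ : E → Bool | ξ x = v} := by
  have := (measurable_pi_apply (X := fun _ : E => Bool) x) (measurableSet_singleton v)
  simpa [Set.preimage] using this

private lemma upd_upd (ξ : E → Bool) (x : E) (hx : ξ x = true) :
    Function.update (Function.update ξ x false) x true = ξ := by
  rw [Function.update_idem]
  conv_lhs => rw [← hx]
  exact Function.update_eq_self x ξ

private lemma max_sub_max (a : ℝ) : max a 0 - max (-a) 0 = a := by
  rcases le_total 0 a with h | h
  · rw [max_eq_left h, max_eq_right (neg_nonpos.mpr h), sub_zero]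
  · rw [max_eq_right h, max_eq_left (neg_nonneg.mpr h), zero_sub, neg_neg]

private lemma abs_sub' (a b : ℝ) : |a - b| ≤ |a| + |b| := by
  calc |a - b| = |a + -b| := by rw [sub_eq_add_neg]
    _ ≤ |a| + |-b| := abs_add_le _ _
    _ = |a| + |b| := by rw [abs_neg]

private lemma mul3 {a b c A B C' : ℝ} (h1 : |a| ≤ A) (h2 : |b| ≤ B) (h3 : |c| ≤ C') :
    |a * (b * c)| ≤ A * (B * C') := by
  rw [abs_mul, abs_mul]
  exact mul_le_mul h1 (mul_le_mul h2 h3 (abs_nonneg _) ((abs_nonneg _).trans h2))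
    (mul_nonneg (abs_nonneg _) (abs_nonneg _)) ((abs_nonneg _).trans h1)

private lemma meas_tsum_nonneg (u : E → (E → Bool) → ℝ) (hm : ∀ x, Measurable (u x))
    (h0 : ∀ x ξ, 0 ≤ u x ξ) (hs : ∀ ξ, Summable fun x => u x ξ) :
    Measurable fun ξ => ∑' x, u x ξ := by
  have he : (fun ξ => ∑' x, u x ξ) = fun ξ => (∑' x, ENNReal.ofReal (u x ξ)).toReal := by
    funext ξ
    rw [← ENNReal.ofReal_tsum_of_nonneg (fun x => h0 x ξ) (hs ξ),
      ENNReal.toReal_ofReal (tsum_nonneg fun x => h0 x ξ)]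
  rw [he]
  exact (Measurable.ennreal_tsum fun x => (hm x).ennreal_ofReal).ennreal_toReal

private lemma meas_tsum (u : E → (E → Bool) → ℝ) (hm : ∀ x, Measurable (u x))
    (M : E → ℝ) (hM : Summable M) (hb : ∀ x ξ, |u x ξ| ≤ M x) :
    Measurable fun ξ => ∑' x, u x ξ := by
  have hM0 : ∀ x, 0 ≤ M x := fun x => (abs_nonneg _).trans (hb x fun _ => false)
  have hsp : ∀ ξ, Summable fun x => max (u x ξ) 0 := fun ξ =>
    Summable.of_nonneg_of_le (fun x => le_max_right _ _)
      (fun x => max_le ((le_abs_self _).trans (hb x ξ)) (hM0 x)) hM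
  have hsn : ∀ ξ, Summable fun x => max (-u x ξ) 0 := fun ξ =>
    Summable.of_nonneg_of_le (fun x => le_max_right _ _)
      (fun x => max_le ((neg_le_abs _).trans (hb x ξ)) (hM0 x)) hM
  have he : (fun ξ => ∑' x, u x ξ)
      = fun ξ => (∑' x, max (u x ξ) 0) - ∑' x, max (-u x ξ) 0 := by
    funext ξ
    rw [← Summable.tsum_sub (hsp ξ) (hsn ξ)]
    exact (tsum_congr fun x => (max_sub_max (u x ξ)).symm)
  rw [he]
  exact (meas_tsum_nonneg _ (fun x => (hm x).max measurable_const)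
      (fun x ξ => le_max_right _ _) hsp).sub
    (meas_tsum_nonneg _ (fun x => (hm x).neg.max measurable_const)
      (fun x ξ => le_max_right _ _) hsn)

private lemma abs_tsum_le (u : E → ℝ) (M : E → ℝ) (hM : Summable M) (hb : ∀ x, |u x| ≤ M x) :
    |∑' x, u x| ≤ ∑' x, M x := by
  have hu : Summable u := Summable.of_norm_bounded hM
    (fun x => by simpa [Real.norm_eq_abs] using hb x)
  refine abs_le.mpr ⟨?_, Summable.tsum_le_tsum (fun x => (le_abs_self _).trans (hb x)) hu hM⟩
  rw [neg_le, ← tsum_neg]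
  exact Summable.tsum_le_tsum (fun x => (neg_le_abs _).trans (hb x)) hu.neg hM

private lemma integ_tsum (μ : Measure (E → Bool)) [IsProbabilityMeasure μ]
    (u : E → (E → Bool) → ℝ) (hm : ∀ x, Measurable (u x))
    (M : E → ℝ) (hM : Summable M) (hb : ∀ x ξ, |u x ξ| ≤ M x) :
    Integrable (fun ξ => ∑' x, u x ξ) μ := by
  refine (integrable_const (∑' x, M x)).mono'
    (meas_tsum u hm M hM hb).aestronglyMeasurable (ae_of_all _ fun ξ => ?_)
  simpa [Real.norm_eq_abs] using abs_tsum_le (fun x => u x ξ) M hM fun x => hb x ξ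

/-- Nonnegative version of the GNZ identity for real-valued test functions. -/
private lemma gnz0 (μ : Measure (E → Bool)) [IsProbabilityMeasure μ]
    (α : E → (E → Bool) → ℝ) (hα0 : ∀ x ξ, 0 ≤ α x ξ)
    (hPap : ∀ h : E → (E → Bool) → ℝ≥0∞, (∀ x, Measurable (h x)) →
      (∫⁻ ξ, ∑' x : E,
          (if ξ x = true then h x (Function.update ξ x false) else 0) ∂μ) =
      ∫⁻ ξ, ∑' x : E,
          (if ξ x = false then ENNReal.ofReal (α x ξ) * h x ξ else 0) ∂μ)
    (b d : E → (E → Bool) → ℝ)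
    (hb0 : ∀ x ξ, 0 ≤ b x ξ) (hd0 : ∀ x ξ, 0 ≤ d x ξ)
    (hbmeas : ∀ x, Measurable (b x)) (hdmeas : ∀ x, Measurable (d x))
    (C : ℝ) (hC0 : 0 ≤ C) (hbC : ∀ x ξ, b x ξ ≤ C) (hdC : ∀ x ξ, d x ξ ≤ C)
    (hdb : ∀ x ξ, ξ x = false → b x ξ = α x ξ * d x (Function.update ξ x true))
    (φ : E → (E → Bool) → ℝ) (hφ0 : ∀ x ξ, 0 ≤ φ x ξ) (hφm : ∀ x, Measurable (φ x))
    (M : E → ℝ) (hM : Summable M) (hφM : ∀ x ξ, φ x ξ ≤ M x) :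
    (∫ ξ, ∑' x, (if ξ x = true then d x ξ * φ x (Function.update ξ x false) else 0) ∂μ)
      = ∫ ξ, ∑' x, (if ξ x = false then b x ξ * φ x ξ else 0) ∂μ := by
  have hM0 : ∀ x, 0 ≤ M x := fun x => (hφ0 x fun _ => false).trans (hφM x _)
  have hud0 : ∀ (x : E) (ξ : E → Bool),
      0 ≤ (if ξ x = true then d x ξ * φ x (Function.update ξ x false) else 0) := by
    intro x ξ; split
    · exact mul_nonneg (hd0 _ _) (hφ0 _ _)
    · exact le_rfl
  have hub0 : ∀ (x : E) (ξ : E → Bool), 0 ≤ (if ξ x = false then b x ξ * φ x ξ else 0) := by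
    intro x ξ; split
    · exact mul_nonneg (hb0 _ _) (hφ0 _ _)
    · exact le_rfl
  have hudM : ∀ (x : E) (ξ : E → Bool),
      (if ξ x = true then d x ξ * φ x (Function.update ξ x false) else 0) ≤ C * M x := by
    intro x ξ; split
    · exact mul_le_mul (hdC x ξ) (hφM x _) (hφ0 x _) hC0
    · exact mul_nonneg hC0 (hM0 x)
  have hubM : ∀ (x : E) (ξ : E → Bool),
      (if ξ x = false then b x ξ * φ x ξ else 0) ≤ C * M x := by
    intro x ξ; split
    · exact mul_le_mul (hbC x ξ) (hφM x _) (hφ0 x _) hC0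
    · exact mul_nonneg hC0 (hM0 x)
  have hsd : ∀ ξ : E → Bool,
      Summable fun x => if ξ x = true then d x ξ * φ x (Function.update ξ x false) else 0 :=
    fun ξ => Summable.of_nonneg_of_le (fun x => hud0 x ξ) (fun x => hudM x ξ) (hM.mul_left C)
  have hsb : ∀ ξ : E → Bool,
      Summable fun x => if ξ x = false then b x ξ * φ x ξ else 0 :=
    fun ξ => Summable.of_nonneg_of_le (fun x => hub0 x ξ) (fun x => hubM x ξ) (hM.mul_left C)
  have hudm : ∀ x : E, Measurable fun ξ : E → Bool =>
      if ξ x = true then d x ξ * φ x (Function.update ξ x false) else 0 := fun x =>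
    Measurable.ite (measSet x true)
      ((hdmeas x).mul ((hφm x).comp measurable_update_left)) measurable_const
  have hubm : ∀ x : E, Measurable fun ξ : E → Bool =>
      if ξ x = false then b x ξ * φ x ξ else 0 := fun x =>
    Measurable.ite (measSet x false) ((hbmeas x).mul (hφm x)) measurable_const
  have hLdm : Measurable fun ξ : E → Bool =>
      ∑' x, (if ξ x = true then d x ξ * φ x (Function.update ξ x false) else 0) :=
    meas_tsum_nonneg _ hudm hud0 hsd
  have hLbm : Measurable fun ξ : E → Bool =>
      ∑' x, (if ξ x = false then b x ξ * φ x ξ else 0) :=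
    meas_tsum_nonneg _ hubm hub0 hsb
  have key : (∫⁻ ξ, ENNReal.ofReal
        (∑' x, (if ξ x = true then d x ξ * φ x (Function.update ξ x false) else 0)) ∂μ)
      = ∫⁻ ξ, ENNReal.ofReal (∑' x, (if ξ x = false then b x ξ * φ x ξ else 0)) ∂μ := by
    have e1 : ∀ ξ : E → Bool, ENNReal.ofReal
        (∑' x, (if ξ x = true then d x ξ * φ x (Function.update ξ x false) else 0))
        = ∑' x, (if ξ x = true
            then ENNReal.ofReal (d x ξ * φ x (Function.update ξ x false)) else 0) := by
      intro ξ
      rw [ENNReal.ofReal_tsum_of_nonneg (fun x => hud0 x ξ) (hsd ξ)]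
      exact tsum_congr fun x => by split <;> simp
    have e2 : ∀ ξ : E → Bool, ENNReal.ofReal (∑' x, (if ξ x = false then b x ξ * φ x ξ else 0))
        = ∑' x, (if ξ x = false then ENNReal.ofReal (b x ξ * φ x ξ) else 0) := by
      intro ξ
      rw [ENNReal.ofReal_tsum_of_nonneg (fun x => hub0 x ξ) (hsb ξ)]
      exact tsum_congr fun x => by split <;> simp
    simp_rw [e1, e2]
    have hpap := hPap (fun x ξ => ENNReal.ofReal (d x (Function.update ξ x true) * φ x ξ))
      (fun x => (((hdmeas x).comp measurable_update_left).mul (hφm x)).ennreal_ofReal)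
    calc (∫⁻ ξ, ∑' x, (if ξ x = true
            then ENNReal.ofReal (d x ξ * φ x (Function.update ξ x false)) else 0) ∂μ)
        = ∫⁻ ξ, ∑' x, (if ξ x = true
            then ENNReal.ofReal (d x (Function.update (Function.update ξ x false) x true)
              * φ x (Function.update ξ x false)) else 0) ∂μ := by
          refine lintegral_congr fun ξ => tsum_congr fun x => ?_
          by_cases h : ξ x = true
          · rw [if_pos h, if_pos h, upd_upd ξ x h]
          · rw [if_neg h, if_neg h]
      _ = ∫⁻ ξ, ∑' x, (if ξ x = false then ENNReal.ofReal (α x ξ)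
            * ENNReal.ofReal (d x (Function.update ξ x true) * φ x ξ) else 0) ∂μ := hpap
      _ = ∫⁻ ξ, ∑' x, (if ξ x = false then ENNReal.ofReal (b x ξ * φ x ξ) else 0) ∂μ := by
          refine lintegral_congr fun ξ => tsum_congr fun x => ?_
          by_cases h : ξ x = false
          · rw [if_pos h, if_pos h, ← ENNReal.ofReal_mul (hα0 x ξ), hdb x ξ h, mul_assoc]
          · rw [if_neg h, if_neg h]
  rw [integral_eq_lintegral_of_nonneg_ae (ae_of_all _ fun ξ => tsum_nonneg fun x => hud0 x ξ)
      hLdm.aestronglyMeasurable,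
    integral_eq_lintegral_of_nonneg_ae (ae_of_all _ fun ξ => tsum_nonneg fun x => hub0 x ξ)
      hLbm.aestronglyMeasurable, key]

/-- Signed version of the GNZ identity for real-valued test functions. -/
private lemma gnz (μ : Measure (E → Bool)) [IsProbabilityMeasure μ]
    (α : E → (E → Bool) → ℝ) (hα0 : ∀ x ξ, 0 ≤ α x ξ)
    (hPap : ∀ h : E → (E → Bool) → ℝ≥0∞, (∀ x, Measurable (h x)) →
      (∫⁻ ξ, ∑' x : E,
          (if ξ x = true then h x (Function.update ξ x false) else 0) ∂μ) =
      ∫⁻ ξ, ∑' x : E,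
          (if ξ x = false then ENNReal.ofReal (α x ξ) * h x ξ else 0) ∂μ)
    (b d : E → (E → Bool) → ℝ)
    (hb0 : ∀ x ξ, 0 ≤ b x ξ) (hd0 : ∀ x ξ, 0 ≤ d x ξ)
    (hbmeas : ∀ x, Measurable (b x)) (hdmeas : ∀ x, Measurable (d x))
    (C : ℝ) (hC0 : 0 ≤ C) (hbC : ∀ x ξ, b x ξ ≤ C) (hdC : ∀ x ξ, d x ξ ≤ C)
    (hdb : ∀ x ξ, ξ x = false → b x ξ = α x ξ * d x (Function.update ξ x true))
    (φ : E → (E → Bool) → ℝ) (hφm : ∀ x, Measurable (φ x))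
    (M : E → ℝ) (hM : Summable M) (hφM : ∀ x ξ, |φ x ξ| ≤ M x) :
    (∫ ξ, ∑' x, (if ξ x = true then d x ξ * φ x (Function.update ξ x false) else 0) ∂μ)
      = ∫ ξ, ∑' x, (if ξ x = false then b x ξ * φ x ξ else 0) ∂μ := by
  have hM0 : ∀ x, 0 ≤ M x := fun x => (abs_nonneg _).trans (hφM x fun _ => false)
  set φp : E → (E → Bool) → ℝ := fun x ξ => max (φ x ξ) 0 with hφp
  set φn : E → (E → Bool) → ℝ := fun x ξ => max (-φ x ξ) 0 with hφn
  have hφp0 : ∀ x ξ, 0 ≤ φp x ξ := fun x ξ => le_max_right _ _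
  have hφn0 : ∀ x ξ, 0 ≤ φn x ξ := fun x ξ => le_max_right _ _
  have hφpM : ∀ x ξ, φp x ξ ≤ M x := fun x ξ =>
    max_le ((le_abs_self _).trans (hφM x ξ)) (hM0 x)
  have hφnM : ∀ x ξ, φn x ξ ≤ M x := fun x ξ =>
    max_le ((neg_le_abs _).trans (hφM x ξ)) (hM0 x)
  have hφpm : ∀ x, Measurable (φp x) := fun x => (hφm x).max measurable_const
  have hφnm : ∀ x, Measurable (φn x) := fun x => (hφm x).neg.max measurable_const
  have h1 := gnz0 μ α hα0 hPap b d hb0 hd0 hbmeas hdmeas C hC0 hbC hdC hdb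
    φp hφp0 hφpm M hM hφpM
  have h2 := gnz0 μ α hα0 hPap b d hb0 hd0 hbmeas hdmeas C hC0 hbC hdC hdb
    φn hφn0 hφnm M hM hφnM
  -- summability and integrability ingredients
  have habs : ∀ (ψ : E → (E → Bool) → ℝ), (∀ x ξ, |ψ x ξ| ≤ M x) →
      (∀ (x : E) (ξ : E → Bool),
        |if ξ x = true then d x ξ * ψ x (Function.update ξ x false) else 0| ≤ C * M x) := by
    intro ψ hψ x ξ; split
    · rw [abs_mul, abs_of_nonneg (hd0 x ξ)]
      exact mul_le_mul (hdC x ξ) (hψ x _) (abs_nonneg _) hC0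
    · simpa using mul_nonneg hC0 (hM0 x)
  have habs' : ∀ (ψ : E → (E → Bool) → ℝ), (∀ x ξ, |ψ x ξ| ≤ M x) →
      (∀ (x : E) (ξ : E → Bool),
        |if ξ x = false then b x ξ * ψ x ξ else 0| ≤ C * M x) := by
    intro ψ hψ x ξ; split
    · rw [abs_mul, abs_of_nonneg (hb0 x ξ)]
      exact mul_le_mul (hbC x ξ) (hψ x _) (abs_nonneg _) hC0
    · simpa using mul_nonneg hC0 (hM0 x)
  have hpabs : ∀ x ξ, |φp x ξ| ≤ M x := fun x ξ => by
    rw [abs_of_nonneg (hφp0 x ξ)]; exact hφpM x ξ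
  have hnabs : ∀ x ξ, |φn x ξ| ≤ M x := fun x ξ => by
    rw [abs_of_nonneg (hφn0 x ξ)]; exact hφnM x ξ
  have hmd : ∀ (ψ : E → (E → Bool) → ℝ), (∀ x, Measurable (ψ x)) →
      ∀ x : E, Measurable fun ξ : E → Bool =>
        if ξ x = true then d x ξ * ψ x (Function.update ξ x false) else 0 := fun ψ hψ x =>
    Measurable.ite (measSet x true)
      ((hdmeas x).mul ((hψ x).comp measurable_update_left)) measurable_const
  have hmb : ∀ (ψ : E → (E → Bool) → ℝ), (∀ x, Measurable (ψ x)) →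
      ∀ x : E, Measurable fun ξ : E → Bool =>
        if ξ x = false then b x ξ * ψ x ξ else 0 := fun ψ hψ x =>
    Measurable.ite (measSet x false) ((hbmeas x).mul (hψ x)) measurable_const
  have hsum : ∀ (u : E → (E → Bool) → ℝ),
      (∀ x ξ, |u x ξ| ≤ C * M x) → ∀ ξ, Summable fun x => u x ξ := fun u hu ξ =>
    Summable.of_norm_bounded (hM.mul_left C)
      (fun x => by simpa [Real.norm_eq_abs] using hu x ξ)
  -- split the LHS
  have eLHS : ∀ ξ : E → Bool,
      (∑' x, (if ξ x = true then d x ξ * φ x (Function.update ξ x false) else 0))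
      = (∑' x, (if ξ x = true then d x ξ * φp x (Function.update ξ x false) else 0))
        - ∑' x, (if ξ x = true then d x ξ * φn x (Function.update ξ x false) else 0) := by
    intro ξ
    rw [← Summable.tsum_sub (hsum _ (habs φp hpabs) ξ) (hsum _ (habs φn hnabs) ξ)]
    refine tsum_congr fun x => ?_
    by_cases h : ξ x = true
    · rw [if_pos h, if_pos h, if_pos h, ← mul_sub, max_sub_max]
    · rw [if_neg h, if_neg h, if_neg h, sub_zero]
  have eRHS : ∀ ξ : E → Bool,
      (∑' x, (if ξ x = false then b x ξ * φ x ξ else 0))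
      = (∑' x, (if ξ x = false then b x ξ * φp x ξ else 0))
        - ∑' x, (if ξ x = false then b x ξ * φn x ξ else 0) := by
    intro ξ
    rw [← Summable.tsum_sub (hsum _ (habs' φp hpabs) ξ) (hsum _ (habs' φn hnabs) ξ)]
    refine tsum_congr fun x => ?_
    by_cases h : ξ x = false
    · rw [if_pos h, if_pos h, if_pos h, ← mul_sub, max_sub_max]
    · rw [if_neg h, if_neg h, if_neg h, sub_zero]
  calc (∫ ξ, ∑' x, (if ξ x = true then d x ξ * φ x (Function.update ξ x false) else 0) ∂μ)
      = ∫ ξ, ((∑' x, (if ξ x = true then d x ξ * φp x (Function.update ξ x false) else 0))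
          - ∑' x, (if ξ x = true then d x ξ * φn x (Function.update ξ x false) else 0)) ∂μ :=
        integral_congr_ae (ae_of_all _ eLHS)
    _ = (∫ ξ, ∑' x, (if ξ x = true then d x ξ * φp x (Function.update ξ x false) else 0) ∂μ)
          - ∫ ξ, ∑' x, (if ξ x = true then d x ξ * φn x (Function.update ξ x false) else 0) ∂μ :=
        integral_sub (integ_tsum μ _ (hmd φp hφpm) _ (hM.mul_left C) (habs φp hpabs))
          (integ_tsum μ _ (hmd φn hφnm) _ (hM.mul_left C) (habs φn hnabs))
    _ = (∫ ξ, ∑' x, (if ξ x = false then b x ξ * φp x ξ else 0) ∂μ)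
          - ∫ ξ, ∑' x, (if ξ x = false then b x ξ * φn x ξ else 0) ∂μ := by rw [h1, h2]
    _ = ∫ ξ, ((∑' x, (if ξ x = false then b x ξ * φp x ξ else 0))
          - ∑' x, (if ξ x = false then b x ξ * φn x ξ else 0)) ∂μ :=
        (integral_sub (integ_tsum μ _ (hmb φp hφpm) _ (hM.mul_left C) (habs' φp hpabs))
          (integ_tsum μ _ (hmb φn hφnm) _ (hM.mul_left C) (habs' φn hnabs))).symm
    _ = ∫ ξ, ∑' x, (if ξ x = false then b x ξ * φ x ξ else 0) ∂μ :=
        integral_congr_ae (ae_of_all _ fun ξ => (eRHS ξ).symm)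

end Aux

/-- Half of the symmetry computation: `∫ f · L^G g dμ` equals the symmetric
Dirichlet-form expression. -/
private lemma half {E : Type*} [Countable E] [DecidableEq E]
    (μ : Measure (E → Bool)) [IsProbabilityMeasure μ]
    (α : E → (E → Bool) → ℝ) (hα0 : ∀ x ξ, 0 ≤ α x ξ)
    (hPap : ∀ h : E → (E → Bool) → ℝ≥0∞, (∀ x, Measurable (h x)) →
      (∫⁻ ξ, ∑' x : E,
          (if ξ x = true then h x (Function.update ξ x false) else 0) ∂μ) =
      ∫⁻ ξ, ∑' x : E,
          (if ξ x = false then ENNReal.ofReal (α x ξ) * h x ξ else 0) ∂μ)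
    (b d : E → (E → Bool) → ℝ)
    (hb0 : ∀ x ξ, 0 ≤ b x ξ) (hd0 : ∀ x ξ, 0 ≤ d x ξ)
    (hbmeas : ∀ x, Measurable (b x)) (hdmeas : ∀ x, Measurable (d x))
    (C : ℝ) (hC0 : 0 ≤ C) (hbC : ∀ x ξ, b x ξ ≤ C) (hdC : ∀ x ξ, d x ξ ≤ C)
    (hdb : ∀ x ξ, ξ x = false → b x ξ = α x ξ * d x (Function.update ξ x true))
    (f g : (E → Bool) → ℝ) (hf : Continuous f) (hg : Continuous g)
    (hfD : Summable fun x : E => ⨆ ξ : E → Bool, |f (Function.update ξ x true) - f ξ|)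
    (hgD : Summable fun x : E => ⨆ ξ : E → Bool, |g (Function.update ξ x true) - g ξ|) :
    (∫ ξ, f ξ * glauberGen b d g ξ ∂μ)
      = ∫ ξ, ∑' x, (if ξ x = false
          then -(b x ξ * ((f (Function.update ξ x true) - f ξ)
            * (g (Function.update ξ x true) - g ξ))) else 0) ∂μ := by
  have hne : Nonempty (E → Bool) := ⟨fun _ => false⟩
  have hfm : Measurable f := hf.measurable
  have hgm : Measurable g := hg.measurable
  obtain ⟨Mf, hMf⟩ : ∃ M, ∀ ξ, |f ξ| ≤ M := by
    obtain ⟨ξ0, h⟩ := hf.abs.exists_forall_ge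
      (by rw [Filter.cocompact_eq_bot]; exact Filter.tendsto_bot)
    exact ⟨|f ξ0|, h⟩
  obtain ⟨Mg, hMg⟩ : ∃ M, ∀ ξ, |g ξ| ≤ M := by
    obtain ⟨ξ0, h⟩ := hg.abs.exists_forall_ge
      (by rw [Filter.cocompact_eq_bot]; exact Filter.tendsto_bot)
    exact ⟨|g ξ0|, h⟩
  have hbddf : ∀ x : E, BddAbove (Set.range fun ξ => |f (Function.update ξ x true) - f ξ|) :=
    fun x => ⟨Mf + Mf, by
      rintro r ⟨ξ, rfl⟩
      exact (abs_sub' _ _).trans (add_le_add (hMf _) (hMf _))⟩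
  have hbddg : ∀ x : E, BddAbove (Set.range fun ξ => |g (Function.update ξ x true) - g ξ|) :=
    fun x => ⟨Mg + Mg, by
      rintro r ⟨ξ, rfl⟩
      exact (abs_sub' _ _).trans (add_le_add (hMg _) (hMg _))⟩
  have hΔf : ∀ (x : E) (ξ : E → Bool), |f (Function.update ξ x true) - f ξ|
      ≤ ⨆ η : E → Bool, |f (Function.update η x true) - f η| := fun x ξ => le_ciSup (hbddf x) ξ
  have hΔg : ∀ (x : E) (ξ : E → Bool), |g (Function.update ξ x true) - g ξ|
      ≤ ⨆ η : E → Bool, |g (Function.update η x true) - g η| := fun x ξ => le_ciSup (hbddg x) ξ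
  have hΔf0 : ∀ x : E, 0 ≤ ⨆ η : E → Bool, |f (Function.update η x true) - f η| :=
    fun x => (abs_nonneg _).trans (hΔf x fun _ => false)
  have hΔg0 : ∀ x : E, 0 ≤ ⨆ η : E → Bool, |g (Function.update η x true) - g η| :=
    fun x => (abs_nonneg _).trans (hΔg x fun _ => false)
  have hΔg' : ∀ (x : E) (ξ : E → Bool), ξ x = true → |g (Function.update ξ x false) - g ξ|
      ≤ ⨆ η : E → Bool, |g (Function.update η x true) - g η| := by
    intro x ξ hx
    have h1 : g ξ = g (Function.update (Function.update ξ x false) x true) := by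
      rw [upd_upd ξ x hx]
    rw [h1, abs_sub_comm]
    exact hΔg x _
  have hΔgMg : ∀ x : E, (⨆ η : E → Bool, |g (Function.update η x true) - g η|) ≤ Mg + Mg :=
    fun x => ciSup_le fun ξ => (abs_sub' _ _).trans (add_le_add (hMg _) (hMg _))
  have hMf0 : 0 ≤ Mf := (abs_nonneg _).trans (hMf fun _ => false)
  -- summable majorants
  have hM1 : Summable fun x : E =>
      C * (Mf * ⨆ η : E → Bool, |g (Function.update η x true) - g η|) :=
    (hgD.mul_left Mf).mul_left C
  have hM2 : Summable fun x : E =>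
      C * ((⨆ η : E → Bool, |f (Function.update η x true) - f η|)
        * ⨆ η : E → Bool, |g (Function.update η x true) - g η|) := by
    refine Summable.mul_left C (Summable.of_nonneg_of_le
      (fun x => mul_nonneg (hΔf0 x) (hΔg0 x)) (fun x => ?_) (hfD.mul_right (Mg + Mg)))
    exact mul_le_mul_of_nonneg_left (hΔgMg x) (hΔf0 x)
  have hdabs : ∀ (x : E) (ξ : E → Bool), |d x ξ| ≤ C := fun x ξ => by
    rw [abs_of_nonneg (hd0 x ξ)]; exact hdC x ξ
  have hbabs : ∀ (x : E) (ξ : E → Bool), |b x ξ| ≤ C := fun x ξ => by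
    rw [abs_of_nonneg (hb0 x ξ)]; exact hbC x ξ
  -- bounds for the four term families
  have habs_ud : ∀ (x : E) (ξ : E → Bool),
      |if ξ x = true then d x ξ * (f ξ * (g (Function.update ξ x false) - g ξ)) else 0|
      ≤ C * (Mf * ⨆ η : E → Bool, |g (Function.update η x true) - g η|) := by
    intro x ξ
    by_cases h : ξ x = true
    · rw [if_pos h]
      exact mul3 (hdabs x ξ) (hMf ξ) (hΔg' x ξ h)
    · rw [if_neg h, abs_zero]
      exact mul_nonneg hC0 (mul_nonneg hMf0 (hΔg0 x))
  have habs_ub : ∀ (x : E) (ξ : E → Bool),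
      |if ξ x = false then b x ξ * (f ξ * (g (Function.update ξ x true) - g ξ)) else 0|
      ≤ C * (Mf * ⨆ η : E → Bool, |g (Function.update η x true) - g η|) := by
    intro x ξ
    by_cases h : ξ x = false
    · rw [if_pos h]
      exact mul3 (hbabs x ξ) (hMf ξ) (hΔg x ξ)
    · rw [if_neg h, abs_zero]
      exact mul_nonneg hC0 (mul_nonneg hMf0 (hΔg0 x))
  have habs_ub' : ∀ (x : E) (ξ : E → Bool),
      |if ξ x = false
        then b x ξ * (f (Function.update ξ x true) * (g ξ - g (Function.update ξ x true)))
        else 0|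
      ≤ C * (Mf * ⨆ η : E → Bool, |g (Function.update η x true) - g η|) := by
    intro x ξ
    by_cases h : ξ x = false
    · rw [if_pos h]
      refine mul3 (hbabs x ξ) (hMf _) ?_
      rw [abs_sub_comm]
      exact hΔg x ξ
    · rw [if_neg h, abs_zero]
      exact mul_nonneg hC0 (mul_nonneg hMf0 (hΔg0 x))
  have habs_us : ∀ (x : E) (ξ : E → Bool),
      |if ξ x = false
        then -(b x ξ * ((f (Function.update ξ x true) - f ξ)
          * (g (Function.update ξ x true) - g ξ))) else 0|
      ≤ C * ((⨆ η : E → Bool, |f (Function.update η x true) - f η|)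
          * ⨆ η : E → Bool, |g (Function.update η x true) - g η|) := by
    intro x ξ
    by_cases h : ξ x = false
    · rw [if_pos h, abs_neg]
      exact mul3 (hbabs x ξ) (hΔf x ξ) (hΔg x ξ)
    · rw [if_neg h, abs_zero]
      exact mul_nonneg hC0 (mul_nonneg (hΔf0 x) (hΔg0 x))
  -- measurability of the four term families
  have hm_ud : ∀ x : E, Measurable fun ξ : E → Bool =>
      if ξ x = true then d x ξ * (f ξ * (g (Function.update ξ x false) - g ξ)) else 0 :=
    fun x => Measurable.ite (measSet x true)
      ((hdmeas x).mul (hfm.mul ((hgm.comp measurable_update_left).sub hgm))) measurable_const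
  have hm_ub : ∀ x : E, Measurable fun ξ : E → Bool =>
      if ξ x = false then b x ξ * (f ξ * (g (Function.update ξ x true) - g ξ)) else 0 :=
    fun x => Measurable.ite (measSet x false)
      ((hbmeas x).mul (hfm.mul ((hgm.comp measurable_update_left).sub hgm))) measurable_const
  have hm_ub' : ∀ x : E, Measurable fun ξ : E → Bool =>
      if ξ x = false
        then b x ξ * (f (Function.update ξ x true) * (g ξ - g (Function.update ξ x true)))
        else 0 :=
    fun x => Measurable.ite (measSet x false)
      ((hbmeas x).mul ((hfm.comp measurable_update_left).mul
        (hgm.sub (hgm.comp measurable_update_left)))) measurable_const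
  have hm_us : ∀ x : E, Measurable fun ξ : E → Bool =>
      if ξ x = false
        then -(b x ξ * ((f (Function.update ξ x true) - f ξ)
          * (g (Function.update ξ x true) - g ξ))) else 0 :=
    fun x => Measurable.ite (measSet x false)
      ((hbmeas x).mul (((hfm.comp measurable_update_left).sub hfm).mul
        ((hgm.comp measurable_update_left).sub hgm))).neg measurable_const
  -- summability of each family, pointwise in ξ
  have hsum_ud : ∀ ξ : E → Bool, Summable fun x =>
      if ξ x = true then d x ξ * (f ξ * (g (Function.update ξ x false) - g ξ)) else 0 :=
    fun ξ => Summable.of_norm_bounded hM1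
      (fun x => by simpa [Real.norm_eq_abs] using habs_ud x ξ)
  have hsum_ub : ∀ ξ : E → Bool, Summable fun x =>
      if ξ x = false then b x ξ * (f ξ * (g (Function.update ξ x true) - g ξ)) else 0 :=
    fun ξ => Summable.of_norm_bounded hM1
      (fun x => by simpa [Real.norm_eq_abs] using habs_ub x ξ)
  have hsum_ub' : ∀ ξ : E → Bool, Summable fun x =>
      if ξ x = false
        then b x ξ * (f (Function.update ξ x true) * (g ξ - g (Function.update ξ x true)))
        else 0 :=
    fun ξ => Summable.of_norm_bounded hM1
      (fun x => by simpa [Real.norm_eq_abs] using habs_ub' x ξ)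
  have hsum_us : ∀ ξ : E → Bool, Summable fun x =>
      if ξ x = false
        then -(b x ξ * ((f (Function.update ξ x true) - f ξ)
          * (g (Function.update ξ x true) - g ξ))) else 0 :=
    fun ξ => Summable.of_norm_bounded hM2
      (fun x => by simpa [Real.norm_eq_abs] using habs_us x ξ)
  -- integrability of the four tsum functions
  have int_ud := integ_tsum μ _ hm_ud _ hM1 habs_ud
  have int_ub := integ_tsum μ _ hm_ub _ hM1 habs_ub
  have int_ub' := integ_tsum μ _ hm_ub' _ hM1 habs_ub'
  have int_us := integ_tsum μ _ hm_us _ hM2 habs_us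
  -- pointwise splitting of f · L^G g
  have hsplit : ∀ ξ : E → Bool, f ξ * glauberGen b d g ξ
      = (∑' x, (if ξ x = true then d x ξ * (f ξ * (g (Function.update ξ x false) - g ξ)) else 0))
        + ∑' x, (if ξ x = false
            then b x ξ * (f ξ * (g (Function.update ξ x true) - g ξ)) else 0) := by
    intro ξ
    rw [glauberGen, ← tsum_mul_left, ← Summable.tsum_add (hsum_ud ξ) (hsum_ub ξ)]
    refine tsum_congr fun x => ?_
    cases hx : ξ x
    · simp only [hx]
      norm_num
      ring
    · simp only [hx]
      norm_num
      ring
  -- the GNZ step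
  have hφm : ∀ x : E, Measurable fun ξ : E → Bool =>
      f (Function.update ξ x true) * (g ξ - g (Function.update ξ x true)) :=
    fun x => (hfm.comp measurable_update_left).mul (hgm.sub (hgm.comp measurable_update_left))
  have hφabs : ∀ (x : E) (ξ : E → Bool),
      |f (Function.update ξ x true) * (g ξ - g (Function.update ξ x true))|
        ≤ Mf * ⨆ η : E → Bool, |g (Function.update η x true) - g η| := by
    intro x ξ
    rw [abs_mul]
    refine mul_le_mul (hMf _) ?_ (abs_nonneg _) hMf0
    rw [abs_sub_comm]
    exact hΔg x ξ
  have hgnz := gnz μ α hα0 hPap b d hb0 hd0 hbmeas hdmeas C hC0 hbC hdC hdb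
    (fun x ξ => f (Function.update ξ x true) * (g ξ - g (Function.update ξ x true))) hφm
    (fun x => Mf * ⨆ η : E → Bool, |g (Function.update η x true) - g η|)
    (hgD.mul_left Mf) hφabs
  have hgnz' : (∫ ξ, ∑' x, (if ξ x = true
        then d x ξ * (f ξ * (g (Function.update ξ x false) - g ξ)) else 0) ∂μ)
      = ∫ ξ, ∑' x, (if ξ x = false
        then b x ξ * (f (Function.update ξ x true) * (g ξ - g (Function.update ξ x true)))
        else 0) ∂μ := by
    rw [← hgnz]
    refine integral_congr_ae (ae_of_all _ fun ξ => tsum_congr fun x => ?_)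
    by_cases h : ξ x = true
    · simp only [if_pos h, upd_upd ξ x h]
    · simp only [if_neg h]
  -- combine the two birth terms
  have hcomb : ∀ ξ : E → Bool,
      ((∑' x, (if ξ x = false
          then b x ξ * (f (Function.update ξ x true) * (g ξ - g (Function.update ξ x true)))
          else 0))
        + ∑' x, (if ξ x = false
            then b x ξ * (f ξ * (g (Function.update ξ x true) - g ξ)) else 0))
      = ∑' x, (if ξ x = false
          then -(b x ξ * ((f (Function.update ξ x true) - f ξ)
            * (g (Function.update ξ x true) - g ξ))) else 0) := by
    intro ξ
    rw [← Summable.tsum_add (hsum_ub' ξ) (hsum_ub ξ)]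
    refine tsum_congr fun x => ?_
    by_cases h : ξ x = false
    · rw [if_pos h, if_pos h, if_pos h]
      ring
    · rw [if_neg h, if_neg h, if_neg h, add_zero]
  calc (∫ ξ, f ξ * glauberGen b d g ξ ∂μ)
      = ∫ ξ, ((∑' x, (if ξ x = true
            then d x ξ * (f ξ * (g (Function.update ξ x false) - g ξ)) else 0))
          + ∑' x, (if ξ x = false
              then b x ξ * (f ξ * (g (Function.update ξ x true) - g ξ)) else 0)) ∂μ :=
        integral_congr_ae (ae_of_all _ hsplit)
    _ = (∫ ξ, ∑' x, (if ξ x = true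
            then d x ξ * (f ξ * (g (Function.update ξ x false) - g ξ)) else 0) ∂μ)
          + ∫ ξ, ∑' x, (if ξ x = false
              then b x ξ * (f ξ * (g (Function.update ξ x true) - g ξ)) else 0) ∂μ :=
        integral_add int_ud int_ub
    _ = (∫ ξ, ∑' x, (if ξ x = false
            then b x ξ * (f (Function.update ξ x true) * (g ξ - g (Function.update ξ x true)))
            else 0) ∂μ)
          + ∫ ξ, ∑' x, (if ξ x = false
              then b x ξ * (f ξ * (g (Function.update ξ x true) - g ξ)) else 0) ∂μ := by
        rw [hgnz']
    _ = ∫ ξ, ((∑' x, (if ξ x = false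
            then b x ξ * (f (Function.update ξ x true) * (g ξ - g (Function.update ξ x true)))
            else 0))
          + ∑' x, (if ξ x = false
              then b x ξ * (f ξ * (g (Function.update ξ x true) - g ξ)) else 0)) ∂μ :=
        (integral_add int_ub' int_ub).symm
    _ = ∫ ξ, ∑' x, (if ξ x = false
          then -(b x ξ * ((f (Function.update ξ x true) - f ξ)
            * (g (Function.update ξ x true) - g ξ))) else 0) ∂μ :=
        integral_congr_ae (ae_of_all _ hcomb)


/-- **Detailed balance implies symmetry of the Glauber pregenerator.**
Let `μ` be a probability measure on `X = {0,1}^E` with Papangelou intensity `α`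
(in the sense of the Georgii–Nguyen–Zessin identity), and let `b, d` be bounded
measurable nonnegative birth/death rates with `b(x;ξ) = α(x;ξ)·d(x;ξ∪{x})` whenever
`x ∉ ξ`.  Then for all `f, g ∈ D(X)`,
`∫ f · L^G g dμ = ∫ L^G f · g dμ`. -/
theorem statement6 {E : Type*} [Countable E] [DecidableEq E]
    (μ : Measure (E → Bool)) [IsProbabilityMeasure μ]
    (α : E → (E → Bool) → ℝ)
    (hα0 : ∀ x ξ, 0 ≤ α x ξ) (hαmeas : ∀ x, Measurable (α x))
    (hPap : ∀ h : E → (E → Bool) → ℝ≥0∞, (∀ x, Measurable (h x)) →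
      (∫⁻ ξ, ∑' x : E,
          (if ξ x = true then h x (Function.update ξ x false) else 0) ∂μ) =
      ∫⁻ ξ, ∑' x : E,
          (if ξ x = false then ENNReal.ofReal (α x ξ) * h x ξ else 0) ∂μ)
    (b d : E → (E → Bool) → ℝ)
    (hb0 : ∀ x ξ, 0 ≤ b x ξ) (hd0 : ∀ x ξ, 0 ≤ d x ξ)
    (hbmeas : ∀ x, Measurable (b x)) (hdmeas : ∀ x, Measurable (d x))
    (C : ℝ) (hbC : ∀ x ξ, b x ξ ≤ C) (hdC : ∀ x ξ, d x ξ ≤ C)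
    (hdb : ∀ x ξ, ξ x = false → b x ξ = α x ξ * d x (Function.update ξ x true))
    (f g : (E → Bool) → ℝ) (hf : Continuous f) (hg : Continuous g)
    (hfD : Summable fun x : E => ⨆ ξ : E → Bool, |f (Function.update ξ x true) - f ξ|)
    (hgD : Summable fun x : E => ⨆ ξ : E → Bool, |g (Function.update ξ x true) - g ξ|) :
    (∫ ξ, f ξ * glauberGen b d g ξ ∂μ) = ∫ ξ, glauberGen b d f ξ * g ξ ∂μ := by
  have hC0' : (0:ℝ) ≤ max C 0 := le_max_right _ _
  have hbC' : ∀ x ξ, b x ξ ≤ max C 0 := fun x ξ => (hbC x ξ).trans (le_max_left _ _)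
  have hdC' : ∀ x ξ, d x ξ ≤ max C 0 := fun x ξ => (hdC x ξ).trans (le_max_left _ _)
  have h1 := half μ α hα0 hPap b d hb0 hd0 hbmeas hdmeas (max C 0) hC0' hbC' hdC' hdb
    f g hf hg hfD hgD
  have h2 := half μ α hα0 hPap b d hb0 hd0 hbmeas hdmeas (max C 0) hC0' hbC' hdC' hdb
    g f hg hf hgD hfD
  rw [h1]
  have e : (fun ξ => glauberGen b d f ξ * g ξ) = fun ξ => g ξ * glauberGen b d f ξ :=
    funext fun ξ => mul_comm _ _
  rw [e, h2]
  refine integral_congr_ae (ae_of_all _ fun ξ => tsum_congr fun x => ?_)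
  by_cases h : ξ x = false
  · rw [if_pos h, if_pos h]
    ring
  · rw [if_neg h, if_neg h]
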